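/- Let q, n, r be positive integers and K = (2^{r+1}−1)(1+2q)^n. Then ((2^{r+1}−1)((1+2q)^n − (2q)^n) + 2^r) · C(K, (2^{r+1}−1)(2q)^n) / K > (1 − (2q/(1+2q))^n) · (1 + 1/(2q))^{n(2^{r+1}−1)(2q)^n}, where C(·,·) denotes the binomial coefficient. -/
import Mathlib

lemma aux_pow_div_le_choose : ∀ k n : ℕ, k ≤ n → ((n : ℝ) / k) ^ k ≤ n.choose k := by
  intro k
  induction k with
  | zero => intro n _; simp
  | succ k ih =>
    intro n hkn
    obtain ⟨m, rfl⟩ : ∃ m, n = m + 1 := ⟨n - 1, by omega⟩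
    have hkm : k ≤ m := by omega
    rcases Nat.eq_zero_or_pos k with hk0 | hkpos
    · subst hk0; simp
    · have hC : ((m + 1).choose (k + 1) : ℝ) = (m + 1) * m.choose k / (k + 1) := by
        have := Nat.add_one_mul_choose_eq m k
        have : ((m + 1) * m.choose k : ℝ) = ((m + 1).choose (k + 1)) * (k + 1) := by
          exact_mod_cast congrArg (Nat.cast : ℕ → ℝ) this
        field_simp
        linarith [this]
      have hstep : ((m : ℝ) + 1) / (k + 1) ≤ (m : ℝ) / k := by
        rw [div_le_div_iff₀ (by positivity) (by exact_mod_cast hkpos)]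
        have : (k : ℝ) ≤ m := by exact_mod_cast hkm
        nlinarith
      have hpos : (0:ℝ) ≤ ((m : ℝ) + 1) / (k + 1) := by positivity
      calc ((↑(m+1) : ℝ) / ↑(k+1)) ^ (k+1)
          = (((m:ℝ)+1)/(k+1)) * (((m:ℝ)+1)/(k+1)) ^ k := by push_cast; ring
        _ ≤ (((m:ℝ)+1)/(k+1)) * ((m:ℝ)/k) ^ k := by
            apply mul_le_mul_of_nonneg_left (pow_le_pow_left₀ hpos hstep k) hpos
        _ ≤ (((m:ℝ)+1)/(k+1)) * m.choose k := by
            exact mul_le_mul_of_nonneg_left (ih m hkm) hpos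
        _ = ((m + 1).choose (k + 1) : ℝ) := by rw [hC]; ring

theorem stmt_18 (q n r : ℕ) (hq : 0 < q) (hn : 0 < n) (hr : 0 < r) :
    (((2 : ℝ) ^ (r + 1) - 1) * ((1 + 2 * (q : ℝ)) ^ n - (2 * (q : ℝ)) ^ n) + 2 ^ r) *
        (Nat.choose ((2 ^ (r + 1) - 1) * (1 + 2 * q) ^ n) ((2 ^ (r + 1) - 1) * (2 * q) ^ n) : ℝ) /
        ((((2 ^ (r + 1) - 1) * (1 + 2 * q) ^ n : ℕ) : ℝ)) >
      (1 - (2 * (q : ℝ) / (1 + 2 * (q : ℝ))) ^ n) *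
        (1 + 1 / (2 * (q : ℝ))) ^ (n * ((2 ^ (r + 1) - 1) * (2 * q) ^ n)) := by
  set b : ℕ := (2 ^ (r + 1) - 1) * (2 * q) ^ n with hb
  set K : ℕ := (2 ^ (r + 1) - 1) * (1 + 2 * q) ^ n with hK
  have hQ : (0:ℝ) < 2 * q := by positivity
  have h2r : (1:ℕ) ≤ 2 ^ (r + 1) := Nat.one_le_two_pow
  have hbK : b ≤ K := by
    apply Nat.mul_le_mul_left
    exact Nat.pow_le_pow_left (by omega) n
  -- casts
  have hKc : (K : ℝ) = ((2:ℝ) ^ (r+1) - 1) * (1 + 2 * q) ^ n := by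
    rw [hK]; push_cast [h2r]; ring
  have hbc : (b : ℝ) = ((2:ℝ) ^ (r+1) - 1) * (2 * q) ^ n := by
    rw [hb]; push_cast [h2r]; ring
  have h1lt : (1:ℝ) < 2 ^ (r+1) := one_lt_pow₀ one_lt_two (by omega)
  have hKpos : (0:ℝ) < K := by
    rw [hKc]; apply mul_pos (by linarith) (by positivity)
  have hbpos : (0:ℝ) < b := by
    rw [hbc]; apply mul_pos (by linarith) (by positivity)
  -- the choose bound
  have hchoose := aux_pow_div_le_choose b K hbK
  have hratio : (K : ℝ) / b = (1 + 1 / (2 * (q : ℝ))) ^ n := by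
    rw [hKc, hbc]
    rw [mul_div_mul_left _ _ (by linarith : (2:ℝ)^(r+1) - 1 ≠ 0), ← div_pow]
    congr 1
    field_simp
    ring
  have hbound : (1 + 1 / (2 * (q : ℝ))) ^ (n * b) ≤ (K.choose b : ℝ) := by
    rw [pow_mul]
    calc ((1 + 1 / (2 * (q:ℝ))) ^ n) ^ b = ((K:ℝ)/b) ^ b := by rw [hratio]
      _ ≤ _ := hchoose
  have hCpos : (0:ℝ) < K.choose b := by
    exact_mod_cast Nat.choose_pos hbK
  set A : ℝ := ((2 : ℝ) ^ (r + 1) - 1) * ((1 + 2 * (q : ℝ)) ^ n - (2 * (q : ℝ)) ^ n) with hA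
  have hAK : A = (K:ℝ) - b := by rw [hA, hKc, hbc]; ring
  have hApos : 0 ≤ A := by
    rw [hAK]; have : (b:ℝ) ≤ K := by exact_mod_cast hbK
    linarith
  have hratio2 : (b:ℝ) / K = (2 * (q:ℝ) / (1 + 2 * q)) ^ n := by
    rw [hbc, hKc, mul_div_mul_left _ _ (by linarith : (2:ℝ)^(r+1) - 1 ≠ 0), ← div_pow]
  have hs : 1 - (2 * (q : ℝ) / (1 + 2 * (q : ℝ))) ^ n = A / K := by
    rw [hAK, sub_div, div_self hKpos.ne', hratio2]
  rw [hs]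
  have hBpos : (0:ℝ) < (1 + 1 / (2 * (q : ℝ))) ^ (n * b) := by positivity
  calc A / K * (1 + 1 / (2 * (q : ℝ))) ^ (n * b)
      ≤ A / K * (K.choose b : ℝ) := by
        apply mul_le_mul_of_nonneg_left hbound (by positivity)
    _ < (A + 2 ^ r) * (K.choose b : ℝ) / K := by
        rw [div_mul_eq_mul_div]
        have h2rpos : (0:ℝ) < 2 ^ r := by positivity
        apply (div_lt_div_iff_of_pos_right hKpos).mpr
        nlinarith [mul_pos h2rpos hCpos]
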